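/- arXiv:2108.06450 — 2 statements merged into one kernel-verified Lean document; each statement's English description precedes it below -/
import Mathlib

section
/- Fix integers d ≥ 1 and k ≥ 1. There exist constants 0 < c ≤ C such that for all integers n ≥ 2: c · r_{d,k}(n) ≤ n^{−d} Σ_{v ∈ Z_n^d ∖ {0}} λ_v^{−k} ≤ C · r_{d,k}(n), where r_{d,k}(n) := 1 if d > 2k, r_{d,k}(n) := log n if d = 2k, and r_{d,k}(n) := n^{2k−d} if d < 2k. -/
open scoped BigOperators Classical
open Filter

noncomputable section

namespace RWVacant

/-- The discrete torus `(ℤ/nℤ)^d`. -/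
abbrev Torus (d n : ℕ) : Type := Fin d → ZMod n

/-- The standard basis vectors of the torus. -/
def eT (d n : ℕ) (j : Fin d) : Torus d n := fun i => if i = j then 1 else 0

/-- The transition matrix of the 1/2-lazy simple random walk on the torus. -/
def P (d n : ℕ) : Torus d n → Torus d n → ℝ := fun x y =>
  if y = x then 1 / 2
  else if ∃ j : Fin d, y - x = eT d n j ∨ y - x = -eT d n j then 1 / (4 * (d : ℝ))
  else 0

/-- Entries of the `t`-th matrix power of `P`. -/
def Ppow (d n : ℕ) [NeZero n] : ℕ → Torus d n → Torus d n → ℝ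
  | 0 => fun x y => if x = y then 1 else 0
  | t + 1 => fun x y => ∑ w : Torus d n, Ppow d n t x w * P d n w y

/-- `g_n(ξ)`. -/
def g (d n : ℕ) [NeZero n] (ξ : Torus d n) : ℝ :=
  ∑' t : ℕ, (Ppow d n t 0 ξ - ((n : ℝ) ^ d)⁻¹)

/-- `g_n'(ξ)` (the `t = 0` term vanishes, so we may sum over all `t ≥ 0`). -/
def g' (d n : ℕ) [NeZero n] (ξ : Torus d n) : ℝ :=
  ∑' t : ℕ, (t : ℝ) * (Ppow d n t 0 ξ - ((n : ℝ) ^ d)⁻¹)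

/-- `f_n(ξ)`. -/
def f (d n : ℕ) [NeZero n] (ξ : Torus d n) : ℝ := (g d n 0 + g d n ξ) / 2

/-- `f_n'(ξ)`. -/
def f' (d n : ℕ) [NeZero n] (ξ : Torus d n) : ℝ := (g' d n 0 + g' d n ξ) / 2

/-- The killed transition matrix `Q_A`. -/
def QA (d n : ℕ) (A : Set (Torus d n)) : Torus d n → Torus d n → ℝ := fun x y =>
  if x ∈ A ∨ y ∈ A then 0 else P d n x y

/-- Entries of the `t`-th matrix power of `Q_A`. -/
def QApow (d n : ℕ) [NeZero n] (A : Set (Torus d n)) : ℕ → Torus d n → Torus d n → ℝ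
  | 0 => fun x y => if x = y then 1 else 0
  | t + 1 => fun x y => ∑ w : Torus d n, QApow d n A t x w * QA d n A w y

/-- `P_π(τ(A) > t)`. -/
def tailProb (d n : ℕ) [NeZero n] (A : Set (Torus d n)) (t : ℕ) : ℝ :=
  ((n : ℝ) ^ d)⁻¹ * ∑ x : Torus d n, ∑ y : Torus d n, QApow d n A t x y

/-- `P_π(τ(A) = s)`, with the convention `P_π(τ(A) > -1) = 1`. -/
def eqProb (d n : ℕ) [NeZero n] (A : Set (Torus d n)) : ℕ → ℝ
  | 0 => 1 - tailProb d n A 0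
  | s + 1 => tailProb d n A s - tailProb d n A (s + 1)

/-- The space of `ℓ`-tuples of paths with time horizon `t` in the torus. -/
abbrev PathSpace (d n ℓ t : ℕ) : Type := Fin ℓ → Fin (t + 1) → Torus d n

/-- The probability mass function of `ℓ` independent lazy walks started uniformly. -/
def pmf (d n ℓ t : ℕ) (x : PathSpace d n ℓ t) : ℝ :=
  ∏ i : Fin ℓ, (((n : ℝ) ^ d)⁻¹ * ∏ s : Fin t, P d n (x i s.castSucc) (x i s.succ))

/-- Expectation on the path space. -/
def expect (d n ℓ t : ℕ) [NeZero n] (F : PathSpace d n ℓ t → ℝ) : ℝ :=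
  ∑ x : PathSpace d n ℓ t, pmf d n ℓ t x * F x

/-- Variance on the path space. -/
def variance (d n ℓ t : ℕ) [NeZero n] (F : PathSpace d n ℓ t → ℝ) : ℝ :=
  expect d n ℓ t fun x => (F x - expect d n ℓ t F) ^ 2

/-- Covariance on the path space. -/
def covar (d n ℓ t : ℕ) [NeZero n] (F F' : PathSpace d n ℓ t → ℝ) : ℝ :=
  expect d n ℓ t fun x => (F x - expect d n ℓ t F) * (F' x - expect d n ℓ t F')

/-- The size `V_n^{(ℓ)}(t)` of the vacant set of a path configuration. -/
def Vfun (d n ℓ t : ℕ) [NeZero n] (x : PathSpace d n ℓ t) : ℝ :=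
  (Finset.univ.filter (fun v : Torus d n =>
    ∀ (i : Fin ℓ) (s : Fin (t + 1)), x i s ≠ v)).card

/-- `R^I_{n,ℓ}(t)` of a path configuration. -/
def Rfun (d n ℓ t : ℕ) [NeZero n] (I : Finset (Fin ℓ)) (x : PathSpace d n ℓ t) : ℝ :=
  (Finset.univ.filter (fun v : Torus d n =>
    (∀ i ∈ I, ∃ s : Fin (t + 1), x i s = v) ∧
      (∀ i : Fin ℓ, i ∉ I → ∀ s : Fin (t + 1), x i s ≠ v))).card

/-- Variance of the vacant-set size, with junk value `0` at `n = 0`. -/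
def varV (d ℓ n t : ℕ) : ℝ :=
  if h : n = 0 then 0
  else
    haveI : NeZero n := ⟨h⟩
    variance d n ℓ t (Vfun d n ℓ t)

/-- Covariance of `R^I` and `R^J`, with junk value `0` at `n = 0`. -/
def covR (d ℓ : ℕ) (I J : Finset (Fin ℓ)) (n t : ℕ) : ℝ :=
  if h : n = 0 then 0
  else
    haveI : NeZero n := ⟨h⟩
    covar d n ℓ t (Rfun d n ℓ t I) (Rfun d n ℓ t J)

/-- `Σ_ξ g_n(ξ)²`, with junk value `0` at `n = 0`. -/
def sumGsq (d n : ℕ) : ℝ :=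
  if h : n = 0 then 0
  else
    haveI : NeZero n := ⟨h⟩
    ∑ ξ : Torus d n, g d n ξ ^ 2

/-- `Σ_ξ |g_n(ξ)|³`, with junk value `0` at `n = 0`. -/
def sumGcube (d n : ℕ) : ℝ :=
  if h : n = 0 then 0
  else
    haveI : NeZero n := ⟨h⟩
    ∑ ξ : Torus d n, |g d n ξ| ^ 3

/-- `g_n'(0)`, with junk value `0` at `n = 0`. -/
def gDeriv0 (d n : ℕ) : ℝ :=
  if h : n = 0 then 0
  else
    haveI : NeZero n := ⟨h⟩
    g' d n 0

/-- The eigenvalue `λ_v`. -/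
def lam (d n : ℕ) (v : Fin d → ZMod n) : ℝ :=
  (1 / (d : ℝ)) * ∑ j : Fin d, Real.sin (Real.pi * ((v j).val : ℝ) / (n : ℝ)) ^ 2

/-- The norm `‖v‖` on the torus. -/
def tnorm (d n : ℕ) (v : Torus d n) : ℝ :=
  Real.sqrt (∑ j : Fin d, ((min ((v j).val) (n - (v j).val) : ℕ) : ℝ) ^ 2)

/-- The lattice `ℤ^d`. -/
abbrev Lat (d : ℕ) : Type := Fin d → ℤ

/-- The standard basis vectors of the lattice. -/
def eZ (d : ℕ) (j : Fin d) : Lat d := fun i => if i = j then 1 else 0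

/-- The Euclidean norm on the lattice. -/
def znorm (d : ℕ) (v : Lat d) : ℝ := Real.sqrt (∑ j : Fin d, ((v j : ℝ)) ^ 2)

/-- The step distribution of the 1/2-lazy walk on `ℤ^d`. -/
def mu (d : ℕ) (v : Lat d) : ℝ :=
  if v = 0 then 1 / 2
  else if ∃ j : Fin d, v = eZ d j ∨ v = -eZ d j then 1 / (4 * (d : ℝ))
  else 0

/-- `p_t = μ^{*t}`, the `t`-fold convolution power of `μ`. -/
def ptZ (d : ℕ) : ℕ → Lat d → ℝ
  | 0 => fun v => if v = 0 then 1 else 0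
  | t + 1 => fun v => ∑' w : Lat d, ptZ d t w * mu d (v - w)

/-- The Green's function `G(ξ)` on `ℤ^d`. -/
def G (d : ℕ) (ξ : Lat d) : ℝ := ∑' t : ℕ, ptZ d t ξ

/-- `G'(ξ) = Σ_t t·p_t(ξ)`. -/
def G' (d : ℕ) (ξ : Lat d) : ℝ := ∑' t : ℕ, (t : ℝ) * ptZ d t ξ

/-- Summand of the series defining `ν_d` for `d ≥ 5`. -/
def nuTerm (d : ℕ) (w : ℝ) (ξ : Lat d) : ℝ :=
  Real.exp (w * G d ξ / (G d 0 + G d ξ)) - 1 - w * G d ξ / (G d 0 + G d ξ) +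
    w * G d ξ ^ 2 * (G d ξ - if ξ = 0 then 1 else 0) / (G d 0 ^ 2 * (G d 0 + G d ξ))

/-- `ν_d` for `d ≥ 5`. -/
def nuHigh (d : ℕ) (w : ℝ) : ℝ := Real.exp (-w) * ∑' ξ : Lat d, nuTerm d w ξ

/-- The scaling factor `h_d(n)`. -/
def hFun (d n : ℕ) : ℝ := if d = 3 then (n : ℝ) else if d = 4 then Real.log (n : ℝ) else 1

/-- `Σ_{v ∈ ℤ³∖{0}} ‖v‖⁻⁴`. -/
def sumZ3 : ℝ := ∑' v : Lat 3, if v = 0 then 0 else (znorm 3 v ^ 4)⁻¹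

/-- `(log n)⁻¹ Σ_{v ∈ ℤ⁴, 0 < ‖v‖ ≤ n} ‖v‖⁻⁴`. -/
def logAvgZ4 (n : ℕ) : ℝ :=
  (Real.log (n : ℝ))⁻¹ *
    ∑' v : Lat 4, if v ≠ 0 ∧ znorm 4 v ≤ (n : ℝ) then (znorm 4 v ^ 4)⁻¹ else 0

/-- The constant `α₃`. -/
def alpha3 : ℝ := 9 / (Real.pi ^ 4 * G 3 0 ^ 2) * sumZ3

/-- `ν_d(w) = (1/2) α_d w² e^{-w}` for `d ∈ {3,4}`. -/
def nuLow (αd w : ℝ) : ℝ := 1 / 2 * αd * w ^ 2 * Real.exp (-w)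

/-- `ν_d` for general `d ≥ 3`, where `a4` is the constant `α₄`. -/
def nuAll (d : ℕ) (a4 : ℝ) (w : ℝ) : ℝ :=
  if d = 3 then nuLow alpha3 w else if d = 4 then nuLow a4 w else nuHigh d w

/-- The coefficients `θ_{k,r,m}(a)`. -/
def theta (k r m : ℕ) (a : ℝ) : ℝ :=
  ∑ j ∈ Finset.Icc (m - k) (min r m),
    (Nat.choose k (m - j) : ℝ) * (Nat.choose r j : ℝ) * (1 - 2 * a) ^ (m - j) *
      (-1 : ℝ) ^ (r - j) * a ^ j

/-- The generating function `g_n(ξ; z)`. -/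
def gc (d n : ℕ) [NeZero n] (z : ℂ) (ξ : Torus d n) : ℂ :=
  ∑' t : ℕ, z ^ t * ((Ppow d n t 0 ξ - ((n : ℝ) ^ d)⁻¹ : ℝ) : ℂ)

/-- The generating function `f_n(ξ; z)`. -/
def fc (d n : ℕ) [NeZero n] (z : ℂ) (ξ : Torus d n) : ℂ := (gc d n z 0 + gc d n z ξ) / 2

end RWVacant

open RWVacant
namespace Stmt5Aux
open Finset Real RWVacant

lemma jordan {x : ℝ} (h0 : 0 ≤ x) (h1 : x ≤ 1/2) : 2 * x ≤ Real.sin (Real.pi * x) := by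
  have hpi := Real.pi_pos
  have := Real.mul_le_sin (x := Real.pi * x) (by positivity) (by nlinarith)
  calc 2 * x = 2 / Real.pi * (Real.pi * x) := by field_simp
  _ ≤ _ := this

lemma sin_ge {n a : ℕ} (ha : a < n) :
    2 * ((min a (n - a) : ℕ) : ℝ) / n ≤ Real.sin (Real.pi * a / n) := by
  have hn : 0 < n := lt_of_le_of_lt (Nat.zero_le a) ha
  have hn' : (0:ℝ) < n := by exact_mod_cast hn
  rcases le_total a (n - a) with h | h
  · rw [min_eq_left h]
    have := jordan (x := (a:ℝ)/n) (by positivity)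
      (by rw [div_le_div_iff₀ hn' (by norm_num)]; exact_mod_cast (by omega : a * 2 ≤ 1 * n))
    calc 2 * (a:ℝ) / n = 2 * ((a:ℝ)/n) := by ring
    _ ≤ Real.sin (Real.pi * ((a:ℝ)/n)) := this
    _ = _ := by rw [mul_div_assoc]
  · rw [min_eq_right h]
    have hc : ((n - a : ℕ) : ℝ) = (n:ℝ) - a := by
      push_cast [Nat.cast_sub ha.le]; ring
    have heq : Real.pi * a / n = Real.pi - Real.pi * ((n - a : ℕ):ℝ) / n := by
      rw [hc]; field_simp; ring
    rw [heq, Real.sin_pi_sub]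
    have := jordan (x := ((n-a:ℕ):ℝ)/n) (by positivity)
      (by rw [div_le_div_iff₀ hn' (by norm_num)]; exact_mod_cast (by omega : (n - a) * 2 ≤ 1 * n))
    calc 2 * ((n-a:ℕ):ℝ) / n = 2 * (((n-a:ℕ):ℝ)/n) := by ring
    _ ≤ Real.sin (Real.pi * (((n-a:ℕ):ℝ)/n)) := this
    _ = _ := by rw [mul_div_assoc]

variable {d n : ℕ}

/-- distance to 0 in `ZMod n`. -/
def md (n : ℕ) [NeZero n] (a : ZMod n) : ℕ := min a.val (n - a.val)

lemma md_pos [NeZero n] {a : ZMod n} (ha : a ≠ 0) : 1 ≤ md n a := by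
  have h1 : a.val < n := ZMod.val_lt a
  have h2 : a.val ≠ 0 := fun h => ha ((ZMod.val_eq_zero a).1 h)
  simp only [md]
  omega

lemma md_le [NeZero n] (a : ZMod n) : md n a ≤ n := by
  simp only [md]
  omega

lemma sin_sq_ge_md [NeZero n] (a : ZMod n) :
    (2 * ((md n a : ℕ) : ℝ) / n)^2 ≤ Real.sin (Real.pi * (a.val : ℝ) / n) ^ 2 := by
  have h := sin_ge (ZMod.val_lt a)
  exact pow_le_pow_left₀ (by positivity) h 2

lemma sin_sq_le_bound [NeZero n] {r : ℕ} {a : ZMod n} (h : a.val ≤ r) :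
    Real.sin (Real.pi * (a.val : ℝ) / n) ^ 2 ≤ Real.pi^2 * r^2 / (n:ℝ)^2 := by
  have hn : (0:ℝ) < n := by
    have := Nat.pos_of_ne_zero (NeZero.ne n); exact_mod_cast this
  refine (Real.sin_sq_le_sq).trans ?_
  rw [div_pow, mul_pow]
  gcongr <;> exact_mod_cast h

lemma lam_nonneg [NeZero n] (v : Torus d n) : 0 ≤ lam d n v := by
  rw [lam]
  positivity

lemma lam_le_one [NeZero n] (hd : 0 < d) (v : Torus d n) : lam d n v ≤ 1 := by
  have hd' : (0:ℝ) < d := by exact_mod_cast hd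
  rw [lam]
  have h1 : ∑ j : Fin d, Real.sin (Real.pi * (((v j).val : ℕ) : ℝ) / n) ^ 2 ≤ (d:ℝ) := by
    calc ∑ j : Fin d, Real.sin (Real.pi * (((v j).val : ℕ) : ℝ) / n) ^ 2
        ≤ ∑ _j : Fin d, (1:ℝ) := sum_le_sum fun j _ => Real.sin_sq_le_one _
    _ = (d:ℝ) := by simp
  calc 1/(d:ℝ) * ∑ j : Fin d, Real.sin (Real.pi * (((v j).val : ℕ) : ℝ) / n) ^ 2
      ≤ 1/(d:ℝ) * (d:ℝ) := by
        apply mul_le_mul_of_nonneg_left h1 (by positivity)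
  _ = 1 := by field_simp

lemma lam_pos [NeZero n] (hd : 0 < d) {v : Torus d n} (hv : v ≠ 0) : 0 < lam d n v := by
  have hd' : (0:ℝ) < d := by exact_mod_cast hd
  obtain ⟨j, hj⟩ : ∃ j, v j ≠ 0 := by
    by_contra h
    push_neg at h
    exact hv (funext fun j => h j)
  have hval : 0 < (v j).val := Nat.pos_of_ne_zero (fun h => hj ((ZMod.val_eq_zero _).1 h))
  have hvn : (v j).val < n := ZMod.val_lt _
  have hn : (0:ℝ) < n := by
    have := Nat.pos_of_ne_zero (NeZero.ne n); exact_mod_cast this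
  have hsin : 0 < Real.sin (Real.pi * (((v j).val : ℕ) : ℝ) / n) := by
    apply Real.sin_pos_of_pos_of_lt_pi
    · have : (0:ℝ) < ((v j).val : ℝ) := by exact_mod_cast hval
      positivity
    · rw [div_lt_iff₀ hn]
      have : ((v j).val : ℝ) < (n:ℝ) := by exact_mod_cast hvn
      nlinarith [Real.pi_pos]
  rw [lam]
  apply mul_pos (by positivity)
  apply Finset.sum_pos' (fun i _ => sq_nonneg _)
  exact ⟨j, mem_univ j, pow_pos hsin 2⟩

lemma lam_ge_md [NeZero n] (hd : 0 < d) (v : Torus d n) (j : Fin d) :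
    1/(d:ℝ) * (2 * ((md n (v j) : ℕ) : ℝ) / n)^2 ≤ lam d n v := by
  rw [lam]
  apply mul_le_mul_of_nonneg_left _ (by positivity)
  refine (sin_sq_ge_md (v j)).trans ?_
  exact Finset.single_le_sum (f := fun i => Real.sin (Real.pi * (((v i).val : ℕ) : ℝ) / n) ^ 2)
    (fun i _ => sq_nonneg _) (mem_univ j)

lemma lam_le_box [NeZero n] (hd : 0 < d) {v : Torus d n} {r : ℕ} (h : ∀ j, (v j).val ≤ r) :
    lam d n v ≤ Real.pi^2 * r^2 / (n:ℝ)^2 := by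
  have hd' : (0:ℝ) < d := by exact_mod_cast hd
  rw [lam]
  have h1 : ∑ j : Fin d, Real.sin (Real.pi * (((v j).val : ℕ) : ℝ) / n) ^ 2
      ≤ (d:ℝ) * (Real.pi^2 * r^2 / (n:ℝ)^2) := by
    calc ∑ j : Fin d, Real.sin (Real.pi * (((v j).val : ℕ) : ℝ) / n) ^ 2
        ≤ ∑ _j : Fin d, Real.pi^2 * r^2 / (n:ℝ)^2 :=
          sum_le_sum fun j _ => sin_sq_le_bound (h j)
    _ = (d:ℝ) * (Real.pi^2 * r^2 / (n:ℝ)^2) := by simp [mul_comm]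
  calc 1/(d:ℝ) * ∑ j : Fin d, Real.sin (Real.pi * (((v j).val : ℕ) : ℝ) / n) ^ 2
      ≤ 1/(d:ℝ) * ((d:ℝ) * (Real.pi^2 * r^2 / (n:ℝ)^2)) :=
        mul_le_mul_of_nonneg_left h1 (by positivity)
  _ = Real.pi^2 * r^2 / (n:ℝ)^2 := by field_simp

lemma card_val_le [NeZero n] (r : ℕ) :
    (univ.filter fun a : ZMod n => a.val ≤ r).card ≤ r + 1 := by
  have h := Finset.card_le_card_of_injOn (s := univ.filter fun a : ZMod n => a.val ≤ r)
    (t := Finset.range (r+1)) ZMod.val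
    (by intro a ha; simp only [mem_coe, mem_filter] at ha; simp [Nat.lt_succ_iff, ha.2])
    ((ZMod.val_injective n).injOn)
  simpa using h

lemma card_nval_le [NeZero n] {r : ℕ} (hr : r ≤ n) :
    (univ.filter fun a : ZMod n => n - a.val ≤ r).card ≤ r := by
  have hn : 0 < n := Nat.pos_of_ne_zero (NeZero.ne n)
  have h := Finset.card_le_card_of_injOn (s := univ.filter fun a : ZMod n => n - a.val ≤ r)
    (t := Finset.Icc (n - r) (n-1)) ZMod.val
    (by intro a ha; simp only [mem_coe, mem_filter] at ha
        have := ZMod.val_lt a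
        simp only [Finset.mem_coe, Finset.mem_Icc]; omega)
    ((ZMod.val_injective n).injOn)
  refine h.trans ?_
  rw [Nat.card_Icc]
  omega

lemma card_md_le [NeZero n] {r : ℕ} (hr : r ≤ n) :
    (univ.filter fun a : ZMod n => md n a ≤ r).card ≤ 2 * r + 1 := by
  classical
  have hsub : (univ.filter fun a : ZMod n => md n a ≤ r) ⊆
      (univ.filter fun a : ZMod n => a.val ≤ r) ∪ (univ.filter fun a : ZMod n => n - a.val ≤ r) := by
    intro a ha
    simp only [mem_filter, md, Set.mem_setOf_eq] at ha
    simp only [Finset.mem_union, mem_filter, mem_univ, true_and]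
    replace ha : min a.val (n - a.val) ≤ r := by simpa using ha
    omega
  calc (univ.filter fun a : ZMod n => md n a ≤ r).card
      ≤ _ := Finset.card_le_card hsub
  _ ≤ _ + _ := Finset.card_union_le _ _
  _ ≤ (r+1) + r := add_le_add (card_val_le r) (card_nval_le hr)
  _ = 2*r+1 := by omega

lemma card_md_eq [NeZero n] (r : ℕ) :
    (univ.filter fun a : ZMod n => md n a = r).card ≤ 2 := by
  classical
  have h := Finset.card_le_card_of_injOn (s := univ.filter fun a : ZMod n => md n a = r)
    (t := ({r, n - r} : Finset ℕ)) ZMod.val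
    (by intro a ha; simp only [mem_coe, mem_filter, md, Set.mem_setOf_eq] at ha
        have := ZMod.val_lt a
        simp only [Finset.mem_coe, Finset.mem_insert, Finset.mem_singleton]
        replace ha : min a.val (n - a.val) = r := (Finset.mem_filter.1 ha).2
        omega)
    ((ZMod.val_injective n).injOn)
  refine h.trans ?_
  exact (Finset.card_insert_le _ _).trans (by simp)

/-- the sup of coordinate distances. -/
def msup (d n : ℕ) [NeZero n] (v : Torus d n) : ℕ := univ.sup fun j => md n (v j)

lemma msup_le [NeZero n] (v : Torus d n) : msup d n v ≤ n :=
  Finset.sup_le fun j _ => md_le (v j)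

lemma md_le_msup [NeZero n] (v : Torus d n) (j : Fin d) : md n (v j) ≤ msup d n v :=
  Finset.le_sup (f := fun j => md n (v j)) (mem_univ j)

lemma one_le_msup [NeZero n] {v : Torus d n} (hv : v ≠ 0) : 1 ≤ msup d n v := by
  obtain ⟨j, hj⟩ : ∃ j, v j ≠ 0 := by
    by_contra h
    push_neg at h
    exact hv (funext fun j => h j)
  exact le_trans (md_pos hj) (md_le_msup v j)

lemma exists_msup [NeZero n] (hd : 0 < d) (v : Torus d n) : ∃ j, md n (v j) = msup d n v := by
  have : Nonempty (Fin d) := Fin.pos_iff_nonempty.mp hd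
  obtain ⟨j, -, h⟩ := Finset.exists_mem_eq_sup univ univ_nonempty (fun j => md n (v j))
  exact ⟨j, h.symm⟩

lemma card_fiber [NeZero n] (hd : 0 < d) {r : ℕ} (hr : r ≤ n) :
    (univ.filter fun v : Torus d n => msup d n v = r).card ≤ d * (2 * (2*r+1)^(d-1)) := by
  classical
  set E := univ.filter fun a : ZMod n => md n a = r with hE
  set A := univ.filter fun a : ZMod n => md n a ≤ r with hA
  have hsub : (univ.filter fun v : Torus d n => msup d n v = r) ⊆
      univ.biUnion (fun j : Fin d => Fintype.piFinset fun i => if i = j then E else A) := by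
    intro v hv
    simp only [mem_filter, mem_univ, true_and] at hv
    obtain ⟨j, hj⟩ := exists_msup hd v
    refine Finset.mem_biUnion.2 ⟨j, mem_univ _, Fintype.mem_piFinset.2 fun i => ?_⟩
    by_cases hij : i = j
    · subst hij
      have he : (if i = i then E else A) = E := if_pos rfl
      rw [he, hE, mem_filter]
      exact ⟨mem_univ _, hj.trans hv⟩
    · simp only [if_neg hij, hA, mem_filter, mem_univ, true_and]
      exact (md_le_msup v i).trans (le_of_eq hv)
  refine (Finset.card_le_card hsub).trans Finset.card_biUnion_le |>.trans ?_
  have hone : ∀ j : Fin d, (Fintype.piFinset fun i => if i = j then E else A).card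
      ≤ 2 * (2*r+1)^(d-1) := by
    intro j
    rw [Fintype.card_piFinset]
    calc ∏ i : Fin d, (if i = j then E else A).card
        = (if j = j then E else A).card * ∏ i ∈ univ.erase j, (if i = j then E else A).card :=
          (Finset.mul_prod_erase univ _ (mem_univ j)).symm
    _ ≤ 2 * (2*r+1)^(d-1) := by
        refine Nat.mul_le_mul ?_ ?_
        · rw [if_pos rfl]; exact card_md_eq r
        · have h1 : ∏ i ∈ univ.erase j, (if i = j then E else A).card
              ≤ (2*r+1) ^ (univ.erase j).card := by
            apply Finset.prod_le_pow_card
            intro i hi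
            rw [if_neg (Finset.mem_erase.1 hi).1]
            exact card_md_le hr
          refine h1.trans ?_
          rw [Finset.card_erase_of_mem (mem_univ j), Finset.card_univ, Fintype.card_fin]
  calc ∑ j : Fin d, (Fintype.piFinset fun i => if i = j then E else A).card
      ≤ ∑ _j : Fin d, 2*(2*r+1)^(d-1) := Finset.sum_le_sum fun j _ => hone j
  _ = d * (2 * (2*r+1)^(d-1)) := by simp [Finset.sum_const, Finset.card_univ]

lemma sum_inv_sq (n : ℕ) : ∑ r ∈ Icc 1 n, ((r:ℝ)^2)⁻¹ ≤ 2 := by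
  have key : ∀ m : ℕ, 1 ≤ m → ∑ r ∈ Icc 1 m, ((r:ℝ)^2)⁻¹ ≤ 2 - (m:ℝ)⁻¹ := by
    intro m hm
    induction m with
    | zero => omega
    | succ p ih =>
      rcases Nat.lt_or_ge 1 (p+1) with h | h
      · have hp : 1 ≤ p := by omega
        have hp' : (0:ℝ) < p := by exact_mod_cast hp
        rw [Finset.sum_Icc_succ_top (by omega : 1 ≤ p+1)]
        have h1 := ih hp
        have key1 : (((p:ℝ)+1)^2)⁻¹ ≤ ((p:ℝ)*((p:ℝ)+1))⁻¹ := by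
          apply inv_anti₀ (by positivity)
          nlinarith
        have key2 : ((p:ℝ)*((p:ℝ)+1))⁻¹ = (p:ℝ)⁻¹ - ((p:ℝ)+1)⁻¹ := by
          rw [eq_sub_iff_add_eq]
          field_simp
          ring
        push_cast
        linarith
      · have hp1 : p + 1 = 1 := by omega
        rw [hp1]
        norm_num
  rcases Nat.eq_zero_or_pos n with h | h
  · simp [h]
  · have h1 := key n h
    have h2 : (0:ℝ) ≤ (n:ℝ)⁻¹ := by positivity
    linarith

lemma sum_inv_eq_harmonic (n : ℕ) : ∑ r ∈ Icc 1 n, (r:ℝ)⁻¹ = (harmonic n : ℝ) := by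
  rw [harmonic_eq_sum_Icc]
  push_cast
  rfl

lemma sum_inv_le_log {n : ℕ} (hn : 2 ≤ n) :
    ∑ r ∈ Icc 1 n, (r:ℝ)⁻¹ ≤ (1 + (Real.log 2)⁻¹) * Real.log n := by
  rw [sum_inv_eq_harmonic]
  have h2 := harmonic_le_one_add_log n
  have hlog2 : 0 < Real.log 2 := Real.log_pos (by norm_num)
  have hlogn : Real.log 2 ≤ Real.log n :=
    Real.log_le_log (by norm_num) (by exact_mod_cast hn)
  have h3 : (1:ℝ) ≤ (Real.log 2)⁻¹ * Real.log n := by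
    rw [← div_eq_inv_mul, le_div_iff₀ hlog2]
    linarith
  nlinarith

lemma log_le_two_sum_inv {n : ℕ} (hn : 2 ≤ n) :
    Real.log n ≤ 2 * ∑ r ∈ Icc 1 (n/2), (r:ℝ)⁻¹ := by
  set R := n / 2 with hR
  have h1 : n ≤ (R + 1)^2 := by
    have : n ≤ 2*R + 1 := by omega
    nlinarith [Nat.zero_le R]
  have h2 : Real.log n ≤ Real.log (((R+1)^2 : ℕ) : ℝ) :=
    Real.log_le_log (by positivity) (by exact_mod_cast h1)
  have h3 : Real.log (((R+1)^2 : ℕ) : ℝ) = 2 * Real.log ((R+1 : ℕ) : ℝ) := by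
    push_cast
    rw [Real.log_pow]
    push_cast
    ring
  have h4 : Real.log ((R+1 : ℕ) : ℝ) ≤ ∑ r ∈ Icc 1 R, (r:ℝ)⁻¹ := by
    rw [sum_inv_eq_harmonic]
    exact_mod_cast log_add_one_le_harmonic R
  calc Real.log n ≤ 2 * Real.log ((R+1 : ℕ) : ℝ) := by rw [← h3]; exact h2
  _ ≤ 2 * ∑ r ∈ Icc 1 R, (r:ℝ)⁻¹ := by linarith

lemma sum_upper (d k n : ℕ) [NeZero n] (hd : 1 ≤ d) (hn : 2 ≤ n) :
    ∑ v ∈ (univ : Finset (Torus d n)).erase 0, (lam d n v ^ k)⁻¹ ≤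
      ((d:ℝ)/4)^k * (n:ℝ)^(2*k) * (2*(d:ℝ)*3^(d-1)) *
        ∑ r ∈ Icc 1 n, (r:ℝ)^(d-1) * ((r:ℝ)^(2*k))⁻¹ := by
  classical
  have hd0 : 0 < d := hd
  have hn' : (0:ℝ) < n := by exact_mod_cast lt_of_lt_of_le (by norm_num) hn
  have hd' : (0:ℝ) < d := by exact_mod_cast hd0
  have step1 : ∀ v ∈ (univ : Finset (Torus d n)).erase 0,
      (lam d n v ^ k)⁻¹ ≤ ((d:ℝ)/4)^k * (n:ℝ)^(2*k) * (((msup d n v : ℕ) : ℝ)^(2*k))⁻¹ := by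
    intro v hv
    have hv0 : v ≠ 0 := (Finset.mem_erase.1 hv).1
    have hm1 : 1 ≤ msup d n v := one_le_msup hv0
    have hm0 : (0:ℝ) < ((msup d n v : ℕ) : ℝ) := by exact_mod_cast hm1
    obtain ⟨j, hj⟩ := exists_msup hd0 v
    set m : ℝ := ((msup d n v : ℕ) : ℝ)
    have hL : 4 * m^2 / ((d:ℝ) * (n:ℝ)^2) ≤ lam d n v := by
      have h := lam_ge_md hd0 v j
      rw [hj] at h
      refine le_trans (le_of_eq ?_) h
      field_simp
      ring
    have hLpos : (0:ℝ) < 4 * m^2 / ((d:ℝ)*(n:ℝ)^2) := by positivity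
    have h2 : (lam d n v ^ k)⁻¹ ≤ ((4 * m^2 / ((d:ℝ)*(n:ℝ)^2))^k)⁻¹ := by
      apply inv_anti₀ (pow_pos hLpos k)
      exact pow_le_pow_left₀ hLpos.le hL k
    refine h2.trans (le_of_eq ?_)
    rw [← inv_pow]
    have h3 : (4 * m^2 / ((d:ℝ)*(n:ℝ)^2))⁻¹ = (d:ℝ)/4 * (n:ℝ)^2 * (m^2)⁻¹ := by
      field_simp
    rw [h3, mul_pow, mul_pow, inv_pow, ← pow_mul, ← pow_mul]
  have maps : ∀ v ∈ (univ : Finset (Torus d n)).erase 0, msup d n v ∈ Icc 1 n :=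
    fun v hv => Finset.mem_Icc.2 ⟨one_le_msup (Finset.mem_erase.1 hv).1, msup_le v⟩
  have hfib := Finset.sum_fiberwise_of_maps_to maps
    (fun v => (((msup d n v : ℕ) : ℝ)^(2*k))⁻¹)
  have step2 : ∑ v ∈ (univ : Finset (Torus d n)).erase 0, (((msup d n v : ℕ) : ℝ)^(2*k))⁻¹ ≤
      (2*(d:ℝ)*3^(d-1)) * ∑ r ∈ Icc 1 n, (r:ℝ)^(d-1) * ((r:ℝ)^(2*k))⁻¹ := by
    rw [← hfib, Finset.mul_sum]
    apply Finset.sum_le_sum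
    intro r hr
    obtain ⟨hr1, hrn⟩ := Finset.mem_Icc.1 hr
    have hcongr : ∀ v ∈ ((univ : Finset (Torus d n)).erase 0).filter (fun v => msup d n v = r),
        (((msup d n v : ℕ) : ℝ)^(2*k))⁻¹ = ((r:ℝ)^(2*k))⁻¹ := by
      intro v hv
      rw [(Finset.mem_filter.1 hv).2]
    rw [Finset.sum_congr rfl hcongr, Finset.sum_const, nsmul_eq_mul]
    have hcard : (((univ : Finset (Torus d n)).erase 0).filter (fun v => msup d n v = r)).card
        ≤ 2 * d * 3^(d-1) * r^(d-1) := by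
      have hsub : (((univ : Finset (Torus d n)).erase 0).filter (fun v => msup d n v = r))
          ⊆ univ.filter (fun v => msup d n v = r) :=
        Finset.filter_subset_filter _ (Finset.erase_subset _ _)
      refine (Finset.card_le_card hsub).trans ((card_fiber hd0 hrn).trans ?_)
      have h31 : (2*r+1)^(d-1) ≤ (3*r)^(d-1) :=
        Nat.pow_le_pow_left (by omega) _
      calc d * (2 * (2*r+1)^(d-1)) ≤ d * (2 * (3*r)^(d-1)) := by
            exact Nat.mul_le_mul_left _ (Nat.mul_le_mul_left _ h31)
      _ = 2 * d * 3^(d-1) * r^(d-1) := by rw [Nat.mul_pow]; ring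
    have hrpos : (0:ℝ) ≤ ((r:ℝ)^(2*k))⁻¹ := by positivity
    calc ((((univ : Finset (Torus d n)).erase 0).filter (fun v => msup d n v = r)).card : ℝ)
          * ((r:ℝ)^(2*k))⁻¹
        ≤ (2 * (d:ℝ) * 3^(d-1) * (r:ℝ)^(d-1)) * ((r:ℝ)^(2*k))⁻¹ := by
          apply mul_le_mul_of_nonneg_right _ hrpos
          exact_mod_cast hcard
    _ = 2*(d:ℝ)*3^(d-1) * ((r:ℝ)^(d-1) * ((r:ℝ)^(2*k))⁻¹) := by ring
  calc ∑ v ∈ (univ : Finset (Torus d n)).erase 0, (lam d n v ^ k)⁻¹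
      ≤ ∑ v ∈ (univ : Finset (Torus d n)).erase 0,
          ((d:ℝ)/4)^k * (n:ℝ)^(2*k) * (((msup d n v : ℕ) : ℝ)^(2*k))⁻¹ :=
        Finset.sum_le_sum step1
  _ = ((d:ℝ)/4)^k * (n:ℝ)^(2*k) *
        ∑ v ∈ (univ : Finset (Torus d n)).erase 0, (((msup d n v : ℕ) : ℝ)^(2*k))⁻¹ := by
      rw [Finset.mul_sum]
  _ ≤ ((d:ℝ)/4)^k * (n:ℝ)^(2*k) *
        ((2*(d:ℝ)*3^(d-1)) * ∑ r ∈ Icc 1 n, (r:ℝ)^(d-1) * ((r:ℝ)^(2*k))⁻¹) := by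
      apply mul_le_mul_of_nonneg_left step2 (by positivity)
  _ = _ := by ring

lemma card_torus (d n : ℕ) [NeZero n] : Fintype.card (Torus d n) = n ^ d := by
  classical
  show Fintype.card (Fin d → ZMod n) = n ^ d
  rw [Fintype.card_fun, ZMod.card, Fintype.card_fin]

lemma inv_pow_lam_nonneg [NeZero n] (k : ℕ) (v : Torus d n) : 0 ≤ (lam d n v ^ k)⁻¹ :=
  inv_nonneg.2 (pow_nonneg (lam_nonneg v) k)

lemma sum_lower_triv (d k n : ℕ) [NeZero n] (hd : 1 ≤ d) (hn : 2 ≤ n) :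
    (n:ℝ)^d / 2 ≤ ∑ v ∈ (univ : Finset (Torus d n)).erase 0, (lam d n v ^ k)⁻¹ := by
  classical
  have h1 : ∀ v ∈ (univ : Finset (Torus d n)).erase 0, (1:ℝ) ≤ (lam d n v ^ k)⁻¹ := by
    intro v hv
    have hp := lam_pos hd (Finset.mem_erase.1 hv).1
    have hle := lam_le_one hd v
    rw [one_le_inv₀ (pow_pos hp k)]
    exact pow_le_one₀ hp.le hle
  have hcard : ((univ : Finset (Torus d n)).erase 0).card = n^d - 1 := by
    rw [Finset.card_erase_of_mem (mem_univ 0), Finset.card_univ, card_torus]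
  have h2 : 2 ≤ n^d := le_trans hn (Nat.le_self_pow (by omega) n)
  have h3 : (n:ℝ)^d / 2 ≤ (((univ : Finset (Torus d n)).erase 0).card : ℝ) := by
    rw [hcard]
    have : ((n^d - 1 : ℕ) : ℝ) = (n:ℝ)^d - 1 := by
      push_cast [Nat.cast_sub (by omega : 1 ≤ n^d)]
      ring
    rw [this]
    have : (2:ℝ) ≤ (n:ℝ)^d := by exact_mod_cast h2
    linarith
  refine h3.trans ?_
  have := Finset.card_nsmul_le_sum ((univ : Finset (Torus d n)).erase 0) _ 1 h1
  simpa [nsmul_eq_mul] using this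

lemma sum_lower_shells (d k n : ℕ) [NeZero n] (hd : 1 ≤ d) (hn : 2 ≤ n) :
    ((n:ℝ)^2/Real.pi^2)^k * ∑ r ∈ Icc 1 (n/2), (r:ℝ)^(d-1) * ((r:ℝ)^(2*k))⁻¹
      ≤ ∑ v ∈ (univ : Finset (Torus d n)).erase 0, (lam d n v ^ k)⁻¹ := by
  classical
  have hd0 : 0 < d := hd
  have hn' : (0:ℝ) < n := by exact_mod_cast lt_of_lt_of_le two_pos hn
  set j0 : Fin d := ⟨0, hd0⟩ with hj0
  set S : ℕ → Finset (Torus d n) := fun r =>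
    univ.filter (fun v => (v j0).val = r ∧ ∀ j, (v j).val ≤ r) with hS
  have hS0 : ∀ r, 1 ≤ r → ∀ v ∈ S r, v ∈ (univ : Finset (Torus d n)).erase 0 := by
    intro r hr v hv
    obtain ⟨hv1, hv2⟩ := (Finset.mem_filter.1 hv).2
    refine Finset.mem_erase.2 ⟨?_, mem_univ v⟩
    intro h0
    rw [h0] at hv1
    simp only [Pi.zero_apply, ZMod.val_zero] at hv1
    omega
  have hcard : ∀ r, 1 ≤ r → r ≤ n/2 → r^(d-1) ≤ (S r).card := by
    intro r hr1 hr2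
    have hrn : r < n := by omega
    set W : Finset (Fin d → ℕ) :=
      Fintype.piFinset (fun i => if i = j0 then {r} else Finset.range (r+1)) with hW
    have hbound : ∀ w ∈ W, ∀ i, w i ≤ r := by
      intro w hw i
      have hmem := Fintype.mem_piFinset.1 hw i
      by_cases hij : i = j0
      · rw [if_pos hij] at hmem
        simp only [Finset.mem_singleton] at hmem
        omega
      · rw [if_neg hij] at hmem
        exact Nat.lt_succ_iff.1 (Finset.mem_range.1 hmem)
    have hWcard : W.card = (r+1)^(d-1) := by
      rw [hW, Fintype.card_piFinset]
      calc ∏ i : Fin d, (if i = j0 then ({r} : Finset ℕ) else Finset.range (r+1)).card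
          = (if j0 = j0 then ({r}:Finset ℕ) else Finset.range (r+1)).card *
            ∏ i ∈ univ.erase j0,
              (if i = j0 then ({r}:Finset ℕ) else Finset.range (r+1)).card :=
            (Finset.mul_prod_erase univ _ (mem_univ j0)).symm
      _ = 1 * ∏ _i ∈ univ.erase j0, (r+1) := by
            rw [if_pos rfl, Finset.card_singleton]
            congr 1
            apply Finset.prod_congr rfl
            intro i hi
            rw [if_neg (Finset.mem_erase.1 hi).1, Finset.card_range]
      _ = (r+1)^(d-1) := by
            rw [one_mul, Finset.prod_const, Finset.card_erase_of_mem (mem_univ j0),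
              Finset.card_univ, Fintype.card_fin]
    have hinj : W.card ≤ (S r).card := by
      apply Finset.card_le_card_of_injOn (fun w => fun i => ((w i : ℕ) : ZMod n))
      · intro w hw
        have hwj0 : w j0 = r := by
          have hmem := Fintype.mem_piFinset.1 hw j0
          rw [if_pos rfl] at hmem
          simpa using hmem
        refine Finset.mem_filter.2 ⟨mem_univ _, ?_, ?_⟩
        · show ((w j0 : ℕ) : ZMod n).val = r
          rw [hwj0, ZMod.val_cast_of_lt hrn]
        · intro j
          show ((w j : ℕ) : ZMod n).val ≤ r
          rw [ZMod.val_cast_of_lt (lt_of_le_of_lt (hbound w hw j) hrn)]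
          exact hbound w hw j
      · intro w hw w' hw' heq
        funext i
        have h1 : ((w i : ℕ) : ZMod n) = ((w' i : ℕ) : ZMod n) := congrFun heq i
        have e1 : ((w i : ℕ) : ZMod n).val = w i :=
          ZMod.val_cast_of_lt (lt_of_le_of_lt (hbound w hw i) hrn)
        have e2 : ((w' i : ℕ) : ZMod n).val = w' i :=
          ZMod.val_cast_of_lt (lt_of_le_of_lt (hbound w' hw' i) hrn)
        rw [← e1, ← e2, h1]
    calc r^(d-1) ≤ (r+1)^(d-1) := Nat.pow_le_pow_left (by omega) _
    _ = W.card := hWcard.symm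
    _ ≤ (S r).card := hinj
  have hshell : ∀ r ∈ Icc 1 (n/2),
      ((n:ℝ)^2/Real.pi^2)^k * ((r:ℝ)^(d-1) * ((r:ℝ)^(2*k))⁻¹)
        ≤ ∑ v ∈ S r, (lam d n v ^ k)⁻¹ := by
    intro r hr
    obtain ⟨hr1, hr2⟩ := Finset.mem_Icc.1 hr
    have hr' : (0:ℝ) < r := by exact_mod_cast hr1
    have hterm : ∀ v ∈ S r, ((n:ℝ)^2/(Real.pi^2 * (r:ℝ)^2))^k ≤ (lam d n v ^ k)⁻¹ := by
      intro v hv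
      have hv0 : v ≠ 0 := (Finset.mem_erase.1 (hS0 r hr1 v hv)).1
      have hpos := lam_pos hd0 hv0
      have hbox : lam d n v ≤ Real.pi^2 * r^2 / (n:ℝ)^2 :=
        lam_le_box hd0 (fun j => ((Finset.mem_filter.1 hv).2).2 j)
      have h1 : lam d n v ^ k ≤ (Real.pi^2 * r^2 / (n:ℝ)^2)^k :=
        pow_le_pow_left₀ hpos.le hbox k
      have h2 : ((Real.pi^2 * r^2 / (n:ℝ)^2)^k)⁻¹ ≤ (lam d n v ^ k)⁻¹ :=
        inv_anti₀ (pow_pos hpos k) h1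
      refine le_trans (le_of_eq ?_) h2
      rw [← inv_pow, inv_div]
    have hsum := Finset.card_nsmul_le_sum (S r) _ _ hterm
    calc ((n:ℝ)^2/Real.pi^2)^k * ((r:ℝ)^(d-1) * ((r:ℝ)^(2*k))⁻¹)
        = (r:ℝ)^(d-1) * ((n:ℝ)^2/(Real.pi^2 * (r:ℝ)^2))^k := by
          rw [div_pow, div_pow, mul_pow]
          rw [show ((r:ℝ)^2)^k = (r:ℝ)^(2*k) by rw [← pow_mul]]
          field_simp
    _ ≤ ((S r).card : ℝ) * ((n:ℝ)^2/(Real.pi^2 * (r:ℝ)^2))^k := by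
          apply mul_le_mul_of_nonneg_right _ (by positivity)
          exact_mod_cast hcard r hr1 hr2
    _ ≤ ∑ v ∈ S r, (lam d n v ^ k)⁻¹ := by simpa [nsmul_eq_mul] using hsum
  have hdisj : (↑(Icc 1 (n/2)) : Set ℕ).PairwiseDisjoint S := by
    intro a _ b _ hab
    apply Finset.disjoint_left.2
    intro v hva hvb
    exact hab (((Finset.mem_filter.1 hva).2.1).symm.trans ((Finset.mem_filter.1 hvb).2.1))
  have hsub : (Icc 1 (n/2)).biUnion S ⊆ (univ : Finset (Torus d n)).erase 0 := by
    intro v hv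
    obtain ⟨r, hr, hvr⟩ := Finset.mem_biUnion.1 hv
    exact hS0 r (Finset.mem_Icc.1 hr).1 v hvr
  calc ((n:ℝ)^2/Real.pi^2)^k * ∑ r ∈ Icc 1 (n/2), (r:ℝ)^(d-1) * ((r:ℝ)^(2*k))⁻¹
      = ∑ r ∈ Icc 1 (n/2), ((n:ℝ)^2/Real.pi^2)^k * ((r:ℝ)^(d-1) * ((r:ℝ)^(2*k))⁻¹) := by
        rw [Finset.mul_sum]
  _ ≤ ∑ r ∈ Icc 1 (n/2), ∑ v ∈ S r, (lam d n v ^ k)⁻¹ := Finset.sum_le_sum hshell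
  _ = ∑ v ∈ (Icc 1 (n/2)).biUnion S, (lam d n v ^ k)⁻¹ := (Finset.sum_biUnion hdisj).symm
  _ ≤ ∑ v ∈ (univ : Finset (Torus d n)).erase 0, (lam d n v ^ k)⁻¹ :=
      Finset.sum_le_sum_of_subset_of_nonneg hsub (fun v _ _ => inv_pow_lam_nonneg k v)

end Stmt5Aux
/-- Growth rate of `n^{-d} Σ_{v ≠ 0} λ_v^{-k}` (Lemma 2.1, first part). -/
theorem stmt5 (d k : ℕ) (hd : 1 ≤ d) (hk : 1 ≤ k) :
    ∃ c C : ℝ, 0 < c ∧ c ≤ C ∧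
      ∀ (n : ℕ) [NeZero n], 2 ≤ n →
        c * (if 2 * k < d then (1 : ℝ) else if d = 2 * k then Real.log (n : ℝ)
              else (n : ℝ) ^ (2 * k - d)) ≤
            ((n : ℝ) ^ d)⁻¹ *
              ∑ v ∈ (Finset.univ : Finset (Torus d n)).erase 0, (lam d n v ^ k)⁻¹ ∧
          ((n : ℝ) ^ d)⁻¹ *
              ∑ v ∈ (Finset.univ : Finset (Torus d n)).erase 0, (lam d n v ^ k)⁻¹ ≤
            C * (if 2 * k < d then (1 : ℝ) else if d = 2 * k then Real.log (n : ℝ)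
              else (n : ℝ) ^ (2 * k - d)) := by
  classical
  open Stmt5Aux Finset in
  have hd' : (0:ℝ) < d := by exact_mod_cast hd
  set KU : ℝ := ((d:ℝ)/4)^k * (2*(d:ℝ)*3^(d-1)) with hKU
  have hKUpos : 0 < KU :=
    mul_pos (pow_pos (by positivity) k)
      (mul_pos (by positivity) (pow_pos (by norm_num) _))
  have key : ∃ c C : ℝ, 0 < c ∧ 0 < C ∧ ∀ (n : ℕ) [NeZero n], 2 ≤ n →
      (c * (if 2 * k < d then (1 : ℝ) else if d = 2 * k then Real.log (n : ℝ)
              else (n : ℝ) ^ (2 * k - d)) ≤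
            ((n : ℝ) ^ d)⁻¹ *
              ∑ v ∈ (Finset.univ : Finset (Torus d n)).erase 0, (lam d n v ^ k)⁻¹ ∧
          ((n : ℝ) ^ d)⁻¹ *
              ∑ v ∈ (Finset.univ : Finset (Torus d n)).erase 0, (lam d n v ^ k)⁻¹ ≤
            C * (if 2 * k < d then (1 : ℝ) else if d = 2 * k then Real.log (n : ℝ)
              else (n : ℝ) ^ (2 * k - d))) := by
    rcases lt_trichotomy (2*k) d with hlt | heq | hgt
    · -- d > 2k
      refine ⟨1/2, KU, by norm_num, hKUpos, ?_⟩
      intro n _ hn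
      rw [if_pos hlt]
      have hn' : (0:ℝ) < n := by exact_mod_cast lt_of_lt_of_le two_pos hn
      have hnd : (0:ℝ) < (n:ℝ)^d := by positivity
      constructor
      · have hlow := sum_lower_triv d k n hd hn
        calc (1:ℝ)/2 * 1 = ((n:ℝ)^d)⁻¹ * ((n:ℝ)^d/2) := by field_simp
        _ ≤ _ := mul_le_mul_of_nonneg_left hlow (by positivity)
      · have hup := sum_upper d k n hd hn
        have hsum : ∑ r ∈ Icc 1 n, (r:ℝ)^(d-1) * ((r:ℝ)^(2*k))⁻¹ ≤ (n:ℝ)^(d-2*k) := by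
          have hterm : ∀ r ∈ Icc 1 n, (r:ℝ)^(d-1) * ((r:ℝ)^(2*k))⁻¹ ≤ (n:ℝ)^(d-1-2*k) := by
            intro r hr
            obtain ⟨hr1, hr2⟩ := Finset.mem_Icc.1 hr
            have hr' : (0:ℝ) < r := by exact_mod_cast hr1
            have hsplit : (r:ℝ)^(d-1) = (r:ℝ)^(d-1-2*k) * (r:ℝ)^(2*k) := by
              rw [← pow_add]; congr 1; omega
            rw [hsplit, mul_assoc, mul_inv_cancel₀ (by positivity), mul_one]
            exact pow_le_pow_left₀ hr'.le (by exact_mod_cast hr2) _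
          calc ∑ r ∈ Icc 1 n, (r:ℝ)^(d-1) * ((r:ℝ)^(2*k))⁻¹
              ≤ ∑ _r ∈ Icc 1 n, (n:ℝ)^(d-1-2*k) := Finset.sum_le_sum hterm
          _ = (n:ℝ) * (n:ℝ)^(d-1-2*k) := by
              rw [Finset.sum_const, Nat.card_Icc, nsmul_eq_mul]
              norm_num
          _ = (n:ℝ)^(d-2*k) := by
              rw [← pow_succ']
              congr 1
              omega
        have hpow : (n:ℝ)^(2*k) * (n:ℝ)^(d-2*k) = (n:ℝ)^d := by
          rw [← pow_add]; congr 1; omega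
        calc ((n:ℝ)^d)⁻¹ * ∑ v ∈ (Finset.univ : Finset (Torus d n)).erase 0, (lam d n v ^ k)⁻¹
            ≤ ((n:ℝ)^d)⁻¹ * (((d:ℝ)/4)^k * (n:ℝ)^(2*k) * (2*(d:ℝ)*3^(d-1)) * (n:ℝ)^(d-2*k)) := by
              apply mul_le_mul_of_nonneg_left _ (by positivity)
              refine hup.trans ?_
              exact mul_le_mul_of_nonneg_left hsum (by positivity)
        _ = KU * 1 := by
            rw [show ((d:ℝ)/4)^k * (n:ℝ)^(2*k) * (2*(d:ℝ)*3^(d-1)) * (n:ℝ)^(d-2*k)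
                = KU * ((n:ℝ)^(2*k) * (n:ℝ)^(d-2*k)) from by rw [hKU]; ring, hpow]
            field_simp
    · -- d = 2k
      have hif1 : ¬ (2*k < d) := by omega
      have hif2 : d = 2*k := heq.symm
      refine ⟨1/(2*Real.pi^(2*k)), KU * (1 + (Real.log 2)⁻¹), by positivity,
        mul_pos hKUpos (by positivity), ?_⟩
      intro n _ hn
      rw [if_neg hif1, if_pos hif2]
      have hn' : (0:ℝ) < n := by exact_mod_cast lt_of_lt_of_le two_pos hn
      have hnd : (0:ℝ) < (n:ℝ)^d := by positivity
      have hinv : ∀ (m : ℕ), ∑ r ∈ Icc 1 m, (r:ℝ)^(d-1) * ((r:ℝ)^(2*k))⁻¹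
          = ∑ r ∈ Icc 1 m, (r:ℝ)⁻¹ := by
        intro m
        apply Finset.sum_congr rfl
        intro r hr
        have hr1 := (Finset.mem_Icc.1 hr).1
        have hr' : (0:ℝ) < r := by exact_mod_cast hr1
        have e : (r:ℝ)^(2*k) = (r:ℝ)^(d-1) * r := by rw [← pow_succ]; congr 1; omega
        rw [e, mul_inv, ← mul_assoc, mul_inv_cancel₀ (by positivity), one_mul]
      have hnp : ((n:ℝ)^2/Real.pi^2)^k = (n:ℝ)^d / Real.pi^(2*k) := by
        rw [div_pow, ← pow_mul, ← pow_mul, show d = 2*k from hif2]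
      have hd2k : (n:ℝ)^(2*k) = (n:ℝ)^d := by rw [hif2]
      constructor
      · have hlow := sum_lower_shells d k n hd hn
        rw [hnp, hinv] at hlow
        have hlog := log_le_two_sum_inv hn
        have h5 : (n:ℝ)^d / Real.pi^(2*k) * (Real.log n / 2)
            ≤ ∑ v ∈ (Finset.univ : Finset (Torus d n)).erase 0, (lam d n v ^ k)⁻¹ := by
          refine le_trans ?_ hlow
          apply mul_le_mul_of_nonneg_left (by linarith) (by positivity)
        calc 1/(2*Real.pi^(2*k)) * Real.log n
            = ((n:ℝ)^d)⁻¹ * ((n:ℝ)^d / Real.pi^(2*k) * (Real.log n / 2)) := by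
              rw [show (n:ℝ)^d / Real.pi^(2*k) * (Real.log n / 2)
                  = (n:ℝ)^d * (1/(2*Real.pi^(2*k)) * Real.log n) from by ring,
                inv_mul_cancel_left₀ hnd.ne']
        _ ≤ _ := mul_le_mul_of_nonneg_left h5 (by positivity)
      · have hup := sum_upper d k n hd hn
        rw [hinv] at hup
        have hlogup := sum_inv_le_log hn
        calc ((n:ℝ)^d)⁻¹ * ∑ v ∈ (Finset.univ : Finset (Torus d n)).erase 0, (lam d n v ^ k)⁻¹
            ≤ ((n:ℝ)^d)⁻¹ * (((d:ℝ)/4)^k * (n:ℝ)^(2*k) * (2*(d:ℝ)*3^(d-1))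
                * ((1 + (Real.log 2)⁻¹) * Real.log n)) := by
              apply mul_le_mul_of_nonneg_left _ (by positivity)
              refine hup.trans ?_
              exact mul_le_mul_of_nonneg_left hlogup (by positivity)
        _ = KU * (1 + (Real.log 2)⁻¹) * Real.log n := by
            rw [hd2k, hKU]
            field_simp
    · -- d < 2k
      have hif1 : ¬ (2*k < d) := by omega
      have hif2 : ¬ (d = 2*k) := by omega
      refine ⟨(Real.pi^(2*k))⁻¹, KU * 2, by positivity, by positivity, ?_⟩
      intro n _ hn
      rw [if_neg hif1, if_neg hif2]
      have hn' : (0:ℝ) < n := by exact_mod_cast lt_of_lt_of_le two_pos hn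
      have hnd : (0:ℝ) < (n:ℝ)^d := by positivity
      have hpow : (n:ℝ)^d * (n:ℝ)^(2*k-d) = (n:ℝ)^(2*k) := by
        rw [← pow_add]; congr 1; omega
      constructor
      · have hlow := sum_lower_shells d k n hd hn
        have h1mem : 1 ∈ Icc 1 (n/2) := Finset.mem_Icc.2 ⟨le_refl 1, by omega⟩
        have hone : (1:ℝ) ≤ ∑ r ∈ Icc 1 (n/2), (r:ℝ)^(d-1) * ((r:ℝ)^(2*k))⁻¹ := by
          have := Finset.single_le_sum
            (f := fun r : ℕ => (r:ℝ)^(d-1) * ((r:ℝ)^(2*k))⁻¹)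
            (fun r _ => by positivity) h1mem
          simpa using this
        have h5 : (n:ℝ)^(2*k) / Real.pi^(2*k)
            ≤ ∑ v ∈ (Finset.univ : Finset (Torus d n)).erase 0, (lam d n v ^ k)⁻¹ := by
          refine le_trans ?_ hlow
          have e : ((n:ℝ)^2/Real.pi^2)^k = (n:ℝ)^(2*k) / Real.pi^(2*k) := by
            rw [div_pow, ← pow_mul, ← pow_mul]
          rw [e]
          nlinarith [hone, pow_pos (div_pos (pow_pos hn' 2) (pow_pos Real.pi_pos 2)) k,
            div_pos (pow_pos hn' (2*k)) (pow_pos Real.pi_pos (2*k))]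
        calc (Real.pi^(2*k))⁻¹ * (n:ℝ)^(2*k-d)
            = ((n:ℝ)^d)⁻¹ * ((n:ℝ)^(2*k) / Real.pi^(2*k)) := by
              rw [← hpow]; field_simp
        _ ≤ _ := mul_le_mul_of_nonneg_left h5 (by positivity)
      · have hup := sum_upper d k n hd hn
        have hsum : ∑ r ∈ Icc 1 n, (r:ℝ)^(d-1) * ((r:ℝ)^(2*k))⁻¹ ≤ 2 := by
          have hterm : ∀ r ∈ Icc 1 n, (r:ℝ)^(d-1) * ((r:ℝ)^(2*k))⁻¹ ≤ ((r:ℝ)^2)⁻¹ := by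
            intro r hr
            have hr1 := (Finset.mem_Icc.1 hr).1
            have hr' : (0:ℝ) < r := by exact_mod_cast hr1
            have hbase : (1:ℝ) ≤ (r:ℝ) := by exact_mod_cast hr1
            have e : (r:ℝ)^(2*k) = (r:ℝ)^2 * (r:ℝ)^(2*k-2) := by
              rw [← pow_add]; congr 1; omega
            rw [e, mul_inv]
            calc (r:ℝ)^(d-1) * (((r:ℝ)^2)⁻¹ * ((r:ℝ)^(2*k-2))⁻¹)
                = ((r:ℝ)^(d-1) * ((r:ℝ)^(2*k-2))⁻¹) * ((r:ℝ)^2)⁻¹ := by ring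
            _ ≤ 1 * ((r:ℝ)^2)⁻¹ := by
                apply mul_le_mul_of_nonneg_right _ (by positivity)
                rw [← div_eq_mul_inv, div_le_one (by positivity)]
                exact pow_le_pow_right₀ hbase (by omega)
            _ = ((r:ℝ)^2)⁻¹ := one_mul _
          exact (Finset.sum_le_sum hterm).trans (sum_inv_sq n)
        calc ((n:ℝ)^d)⁻¹ * ∑ v ∈ (Finset.univ : Finset (Torus d n)).erase 0, (lam d n v ^ k)⁻¹
            ≤ ((n:ℝ)^d)⁻¹ * (((d:ℝ)/4)^k * (n:ℝ)^(2*k) * (2*(d:ℝ)*3^(d-1)) * 2) := by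
              apply mul_le_mul_of_nonneg_left _ (by positivity)
              refine hup.trans ?_
              exact mul_le_mul_of_nonneg_left hsum (by positivity)
        _ = KU * 2 * (n:ℝ)^(2*k-d) := by
            rw [← hpow, hKU]
            field_simp
  obtain ⟨c, C, hc, hC, h⟩ := key
  refine ⟨min c C, max c C, lt_min hc hC, (min_le_left c C).trans (le_max_left c C), ?_⟩
  intro n _ hn
  obtain ⟨h1, h2⟩ := h n hn
  have hrate : 0 ≤ (if 2 * k < d then (1:ℝ) else if d = 2*k then Real.log n
      else (n:ℝ)^(2*k-d)) := by
    split
    · norm_num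
    split
    · exact Real.log_nonneg (by exact_mod_cast le_trans (by norm_num) hn)
    · positivity
  constructor
  · exact le_trans (mul_le_mul_of_nonneg_right (min_le_left _ _) hrate) h1
  · exact le_trans h2 (mul_le_mul_of_nonneg_right (le_max_right _ _) hrate)
end
end

section
/- Fix an integer k ≥ 1, positive reals α_0, α_1, …, α_k, and reals 1 = ζ_0 < ζ_1 < ⋯ < ζ_k. Let f(z) := Σ_{i=1}^k α_i/(ζ_i − z) (for z ∉ {ζ_1,…,ζ_k}) and let P_k(z) := Σ_{i=0}^k α_i ∏_{0≤j≤k, j≠i} (ζ_j − z). Then the degree-k polynomial P_k has exactly k roots, all real and distinct, say γ_1 < γ_2 < ⋯ < γ_k, and they interlace: 1 < γ_1 < ζ_1 < γ_2 < ζ_2 < ⋯ < γ_k < ζ_k. Moreover, if γ := 1 + α_0/f(1) satisfies γ < ζ_1, then 1 + α_0/f(γ) ≤ γ_1 ≤ 1 + α_0/f(1). -/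
open scoped BigOperators Classical
open Filter

noncomputable section

open RWVacant
lemma aux_prod_neg_sign {ι : Type*} (s : Finset ι) (f : ι → ℝ)
    (h : ∀ j ∈ s, f j < 0) : 0 < (-1 : ℝ) ^ s.card * ∏ j ∈ s, f j := by
  classical
  induction s using Finset.induction_on with
  | empty => simp
  | insert _ _ hx ih =>
    rename_i a s
    rw [Finset.prod_insert hx, Finset.card_insert_of_notMem hx, pow_succ]
    have h1 := h a (Finset.mem_insert_self a s)
    have h2 := ih fun j hj => h j (Finset.mem_insert_of_mem hj)
    nlinarith

lemma aux_ivt {f : ℝ → ℝ} (hf : Continuous f) {a b : ℝ} (hab : a < b)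
    (h : f a * f b < 0) : ∃ c ∈ Set.Ioo a b, f c = 0 := by
  rcases lt_or_ge (f a) 0 with ha | ha
  · have hb : 0 < f b := by nlinarith
    obtain ⟨c, hc, hc0⟩ := intermediate_value_Ioo hab.le hf.continuousOn ⟨ha, hb⟩
    exact ⟨c, hc, hc0⟩
  · have ha' : 0 < f a := lt_of_le_of_ne ha (fun e => by rw [← e] at h; simp at h)
    have hb : f b < 0 := by nlinarith
    obtain ⟨c, hc, hc0⟩ := intermediate_value_Ioo' hab.le hf.continuousOn ⟨hb, ha'⟩
    exact ⟨c, hc, hc0⟩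

/-- Interlacing of the roots of `P_k` (Lemma 3.1). -/
theorem stmt11 (k : ℕ) (hk : 1 ≤ k) (α ζ : Fin (k + 1) → ℝ)
    (hα : ∀ i, 0 < α i) (hζ0 : ζ 0 = 1) (hζ : StrictMono ζ) :
    let F : ℝ → ℝ := fun z => ∑ i : Fin k, α i.succ / (ζ i.succ - z)
    let Pk : Polynomial ℝ := ∑ i : Fin (k + 1), Polynomial.C (α i) *
      ∏ j ∈ Finset.univ.erase i, (Polynomial.C (ζ j) - Polynomial.X)
    Pk.degree = (k : WithBot ℕ) ∧
    ∃ γ : Fin k → ℝ, StrictMono γ ∧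
      (∀ i : Fin k, ζ i.castSucc < γ i ∧ γ i < ζ i.succ) ∧
      (Pk.map (algebraMap ℝ ℂ)).roots =
        Finset.univ.val.map (fun i : Fin k => ((γ i : ℝ) : ℂ)) ∧
      (1 + α 0 / F 1 < ζ ⟨1, by omega⟩ →
        1 + α 0 / F (1 + α 0 / F 1) ≤ γ ⟨0, by omega⟩ ∧
          γ ⟨0, by omega⟩ ≤ 1 + α 0 / F 1) := by
  intro F Pk
  have hne : Nonempty (Fin k) := ⟨⟨0, hk⟩⟩
  -- eval function
  set p : ℝ → ℝ := fun z => ∑ i : Fin (k+1), α i * ∏ j ∈ Finset.univ.erase i, (ζ j - z)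
    with hp
  have hEval : ∀ z, Pk.eval z = p z := by
    intro z
    simp [Pk, hp, Polynomial.eval_finset_sum, Polynomial.eval_prod]
  have hcard : ∀ i : Fin (k+1), (Finset.univ.erase i).card = k := by
    intro i; rw [Finset.card_erase_of_mem (Finset.mem_univ i)]; simp
  -- degree
  have hQ : ∀ i : Fin (k+1), (∏ j ∈ Finset.univ.erase i, (Polynomial.C (ζ j) - Polynomial.X))
      = (-1 : Polynomial ℝ)^k * ∏ j ∈ Finset.univ.erase i, (Polynomial.X - Polynomial.C (ζ j)) := by
    intro i
    calc (∏ j ∈ Finset.univ.erase i, (Polynomial.C (ζ j) - Polynomial.X))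
        = ∏ j ∈ Finset.univ.erase i, ((-1) * (Polynomial.X - Polynomial.C (ζ j))) :=
          Finset.prod_congr rfl (fun j _ => by ring)
      _ = (-1 : Polynomial ℝ)^k * ∏ j ∈ Finset.univ.erase i, (Polynomial.X - Polynomial.C (ζ j)) := by
          rw [Finset.prod_mul_distrib, Finset.prod_const, hcard i]
  have hmon : ∀ i : Fin (k+1), (∏ j ∈ Finset.univ.erase i, (Polynomial.X - Polynomial.C (ζ j))).Monic :=
    fun i => Polynomial.monic_prod_of_monic _ _ fun j _ => Polynomial.monic_X_sub_C _
  have hdegQ : ∀ i : Fin (k+1), (∏ j ∈ Finset.univ.erase i, (Polynomial.X - Polynomial.C (ζ j))).natDegree = k := by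
    intro i
    rw [Polynomial.natDegree_prod_of_monic _ _ (fun j _ => Polynomial.monic_X_sub_C _)]
    simp [hcard i]
  have hneg1 : (-1 : Polynomial ℝ)^k = Polynomial.C ((-1:ℝ)^k) := by
    rw [map_pow, map_neg, map_one]
  have hdegProd : ∀ i : Fin (k+1),
      (∏ j ∈ Finset.univ.erase i, (Polynomial.C (ζ j) - Polynomial.X)).degree = (k : WithBot ℕ) := by
    intro i
    rw [hQ i, Polynomial.degree_mul, hneg1, Polynomial.degree_C (pow_ne_zero _ (by norm_num)),
      Polynomial.degree_eq_natDegree (hmon i).ne_zero, hdegQ i, zero_add]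
  have hdegle : Pk.degree ≤ (k : WithBot ℕ) := by
    refine (Polynomial.degree_sum_le _ _).trans ?_
    refine Finset.sup_le fun i _ => ?_
    rw [Polynomial.degree_mul, hdegProd i, Polynomial.degree_C (hα i).ne', zero_add]
  have hcoeff : Pk.coeff k = (-1:ℝ)^k * ∑ i, α i := by
    simp only [Pk, Polynomial.finset_sum_coeff, Polynomial.coeff_C_mul]
    rw [Finset.mul_sum]
    refine Finset.sum_congr rfl fun i _ => ?_
    have hc1 : (∏ j ∈ Finset.univ.erase i, (Polynomial.X - Polynomial.C (ζ j))).coeff k = 1 := by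
      have h := (hmon i).coeff_natDegree
      rwa [hdegQ i] at h
    rw [hQ i, hneg1, Polynomial.coeff_C_mul, hc1]
    ring
  have hsumpos : 0 < ∑ i, α i := Finset.sum_pos (fun i _ => hα i) Finset.univ_nonempty
  have hdeg : Pk.degree = (k : WithBot ℕ) :=
    Polynomial.degree_eq_of_le_of_coeff_ne_zero hdegle
      (by rw [hcoeff]; exact mul_ne_zero (pow_ne_zero _ (by norm_num)) hsumpos.ne')
  -- eval at ζ i
  have hEvalζ : ∀ i : Fin (k+1), p (ζ i) = α i * ∏ j ∈ Finset.univ.erase i, (ζ j - ζ i) := by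
    intro i
    rw [hp]
    refine Finset.sum_eq_single i (fun i' _ hne' => ?_) (fun h => absurd (Finset.mem_univ i) h)
    have hmem : i ∈ Finset.univ.erase i' := Finset.mem_erase.mpr ⟨hne'.symm, Finset.mem_univ i⟩
    rw [Finset.prod_eq_zero hmem (by ring), mul_zero]
  -- sign at ζ i
  have hsign : ∀ i : Fin (k+1), 0 < (-1:ℝ)^(i:ℕ) * p (ζ i) := by
    intro i
    rw [hEvalζ i]
    have hset : Finset.univ.erase i = Finset.Iio i ∪ Finset.Ioi i := by
      ext j
      simp only [Finset.mem_erase, Finset.mem_univ, and_true, Finset.mem_union,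
        Finset.mem_Iio, Finset.mem_Ioi]
      exact ne_iff_lt_or_gt
    have hdisj : Disjoint (Finset.Iio i) (Finset.Ioi i) :=
      Finset.disjoint_left.mpr fun j hj hj' =>
        absurd (Finset.mem_Iio.mp hj) (not_lt.mpr (Finset.mem_Ioi.mp hj').le)
    rw [hset, Finset.prod_union hdisj]
    have h1 : 0 < (-1:ℝ)^(i:ℕ) * ∏ j ∈ Finset.Iio i, (ζ j - ζ i) := by
      have := aux_prod_neg_sign (Finset.Iio i) (fun j => ζ j - ζ i)
        (fun j hj => sub_neg.mpr (hζ (Finset.mem_Iio.mp hj)))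
      rwa [Fin.card_Iio] at this
    have h2 : 0 < ∏ j ∈ Finset.Ioi i, (ζ j - ζ i) :=
      Finset.prod_pos fun j hj => sub_pos.mpr (hζ (Finset.mem_Ioi.mp hj))
    nlinarith [mul_pos (mul_pos h1 h2) (hα i)]
  -- continuity of p
  have hpfun : p = fun z => Pk.eval z := funext fun z => (hEval z).symm
  have hpc : Continuous p := by rw [hpfun]; exact Pk.continuous
  -- roots by IVT
  have hroot : ∀ i : Fin k, ∃ c ∈ Set.Ioo (ζ i.castSucc) (ζ i.succ), p c = 0 := by
    intro i
    have h1 := hsign i.castSucc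
    have h2 := hsign i.succ
    have hcs : ((i.castSucc : Fin (k+1)) : ℕ) = (i:ℕ) := rfl
    have hsc : ((i.succ : Fin (k+1)) : ℕ) = (i:ℕ)+1 := rfl
    rw [hcs] at h1
    rw [hsc, pow_succ] at h2
    have hlt : ζ i.castSucc < ζ i.succ := hζ Fin.castSucc_lt_succ
    refine aux_ivt hpc hlt ?_
    have hsq : ((-1:ℝ)^(i:ℕ)) * ((-1:ℝ)^(i:ℕ)) = 1 := by
      rw [← pow_add]; exact Even.neg_one_pow ⟨i, rfl⟩
    nlinarith [mul_pos h1 h2]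
  choose γ hγmem hγroot using hroot
  have hγmono : StrictMono γ := by
    intro a b hab
    have h1 : ζ a.succ ≤ ζ b.castSucc := by
      apply hζ.monotone
      simp only [Fin.le_def, Fin.val_succ, Fin.coe_castSucc]
      exact hab
    exact ((hγmem a).2.trans_le h1).trans (hγmem b).1
  refine ⟨hdeg, γ, hγmono, fun i => ⟨(hγmem i).1, (hγmem i).2⟩, ?_, ?_⟩
  · -- roots over ℂ
    have hPkne : Pk ≠ 0 := fun h => by
      rw [h, Polynomial.degree_zero] at hdeg
      exact absurd hdeg.symm (by simp)
    have hinj : Function.Injective (algebraMap ℝ ℂ) := (algebraMap ℝ ℂ).injective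
    have hPkCne : Pk.map (algebraMap ℝ ℂ) ≠ 0 :=
      (Polynomial.map_ne_zero_iff hinj).mpr hPkne
    have hdegC : (Pk.map (algebraMap ℝ ℂ)).natDegree = k := by
      have := Polynomial.degree_map_eq_of_injective hinj Pk
      rw [hdeg] at this
      exact Polynomial.natDegree_eq_of_degree_eq_some this
    set m : Multiset ℂ := Finset.univ.val.map (fun i : Fin k => ((γ i : ℝ) : ℂ)) with hm
    have hmnodup : m.Nodup :=
      Finset.univ.nodup.map (Complex.ofReal_injective.comp hγmono.injective)
    have hminroots : ∀ a ∈ m, a ∈ (Pk.map (algebraMap ℝ ℂ)).roots := by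
      intro a ha
      rw [hm, Multiset.mem_map] at ha
      obtain ⟨i, _, rfl⟩ := ha
      have hr : Pk.IsRoot (γ i) := by
        rw [Polynomial.IsRoot, hEval]; exact hγroot i
      have := hr.map (f := algebraMap ℝ ℂ)
      rw [Polynomial.mem_roots hPkCne]
      exact this
    have hle : m ≤ (Pk.map (algebraMap ℝ ℂ)).roots := by
      rw [Multiset.le_iff_count]
      intro a
      by_cases ha : a ∈ m
      · rw [Multiset.count_eq_one_of_mem hmnodup ha]
        exact Multiset.one_le_count_iff_mem.mpr (hminroots a ha)
      · rw [Multiset.count_eq_zero_of_notMem ha]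
        exact Nat.zero_le _
    have hcardm : Multiset.card m = k := by simp [hm]
    have hcardle : Multiset.card (Pk.map (algebraMap ℝ ℂ)).roots ≤ Multiset.card m := by
      rw [hcardm]
      exact (Polynomial.card_roots' _).trans hdegC.le
    exact (Multiset.eq_of_le_of_card_le hle hcardle).symm
  · -- final inequalities
    intro hyp
    have hζ1 : (1:ℝ) < ζ ⟨1, by omega⟩ := by
      rw [← hζ0]; exact hζ (by simp [Fin.lt_def])
    have hζ1le : ∀ i : Fin k, ζ ⟨1, by omega⟩ ≤ ζ i.succ := by
      intro i
      apply hζ.monotone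
      simp [Fin.le_def]
    have hFpos : ∀ z, z < ζ ⟨1, by omega⟩ → 0 < F z := by
      intro z hz
      refine Finset.sum_pos (fun i _ => ?_) Finset.univ_nonempty
      exact div_pos (hα i.succ) (sub_pos.mpr (hz.trans_le (hζ1le i)))
    have hFmono : ∀ a b, a ≤ b → b < ζ ⟨1, by omega⟩ → F a ≤ F b := by
      intro a b hab hb
      refine Finset.sum_le_sum fun i _ => ?_
      have h1 : 0 < ζ i.succ - b := sub_pos.mpr (hb.trans_le (hζ1le i))
      have h2 : ζ i.succ - b ≤ ζ i.succ - a := by linarith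
      exact div_le_div_of_nonneg_left (hα i.succ).le h1 h2
    have hh : ∀ a b, 1 ≤ a → a < b → b < ζ ⟨1, by omega⟩ → F a * (a - 1) < F b * (b - 1) := by
      intro a b ha hab hb
      have hFb : 0 < F b := hFpos b hb
      have hFab : F a ≤ F b := hFmono a b hab.le hb
      have h5 : F a * (a - 1) ≤ F b * (a - 1) :=
        mul_le_mul_of_nonneg_right hFab (by linarith)
      have h6 : F b * a < F b * b := mul_lt_mul_of_pos_left hab hFb
      nlinarith [h5, h6]
    -- the first root
    have hcs0 : ((⟨0, by omega⟩ : Fin k).castSucc : Fin (k+1)) = 0 := rfl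
    have hsc0 : ((⟨0, by omega⟩ : Fin k).succ : Fin (k+1)) = ⟨1, by omega⟩ := rfl
    have hmem0' := hγmem ⟨0, by omega⟩
    rw [hcs0, hsc0, hζ0] at hmem0'
    obtain ⟨γ0, hγ0⟩ : ∃ x : ℝ, x = γ ⟨0, by omega⟩ := ⟨_, rfl⟩
    rw [← hγ0]
    have hmem0 : 1 < γ0 ∧ γ0 < ζ ⟨1, by omega⟩ := by rw [hγ0]; exact hmem0'
    have hγ0root : p γ0 = 0 := by rw [hγ0]; exact hγroot ⟨0, by omega⟩
    have hζne : ∀ j, ζ j ≠ γ0 := by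
      intro j
      rcases eq_or_ne j 0 with rfl | hj
      · rw [hζ0]; exact (hmem0.1).ne
      · have h1 : ζ ⟨1, by omega⟩ ≤ ζ j := by
          apply hζ.monotone
          rw [Fin.le_def]
          have hj' : (j : ℕ) ≠ 0 := by intro h; apply hj; exact Fin.ext (by simp [h])
          simpa using Nat.one_le_iff_ne_zero.mpr hj'
        exact (hmem0.2.trans_le h1).ne'
    -- partial fractions identity
    have hid : p γ0 = (∏ j, (ζ j - γ0)) * ∑ i, α i / (ζ i - γ0) := by
      rw [hp, Finset.mul_sum]
      refine Finset.sum_congr rfl fun i _ => ?_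
      have hne' : ζ i - γ0 ≠ 0 := sub_ne_zero.mpr (hζne i)
      rw [← Finset.mul_prod_erase Finset.univ _ (Finset.mem_univ i)]
      field_simp
    have hprodne : (∏ j, (ζ j - γ0)) ≠ 0 :=
      Finset.prod_ne_zero_iff.mpr fun j _ => sub_ne_zero.mpr (hζne j)
    have hS0 : α 0 / (ζ 0 - γ0) + F γ0 = 0 := by
      have h1 : (∏ j, (ζ j - γ0)) * ∑ i, α i / (ζ i - γ0) = 0 := by
        rw [← hid]; exact hγ0root
      have h2 : ∑ i, α i / (ζ i - γ0) = 0 := by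
        rcases mul_eq_zero.mp h1 with h | h
        · exact absurd h hprodne
        · exact h
      rw [← h2, Fin.sum_univ_succ]
    have hfix : F γ0 * (γ0 - 1) = α 0 := by
      rw [hζ0] at hS0
      have hne1 : (1:ℝ) - γ0 ≠ 0 := by
        have := hmem0.1; intro h; linarith
      have h2 : α 0 / (1 - γ0) = -(F γ0) := by linarith
      have h3 : α 0 = -(F γ0) * (1 - γ0) := by
        rw [← h2]; field_simp
      linarith [h3]
    -- the comparison points
    have hF1 : 0 < F 1 := hFpos 1 hζ1
    obtain ⟨gst, hgst⟩ : ∃ x : ℝ, x = 1 + α 0 / F 1 := ⟨_, rfl⟩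
    rw [← hgst] at hyp ⊢
    have h1gst : 1 < gst := by
      rw [hgst]
      have : 0 < α 0 / F 1 := div_pos (hα 0) hF1
      linarith
    have hgstfix : F 1 * (gst - 1) = α 0 := by
      rw [hgst]
      field_simp
      ring
    have hupper : γ0 ≤ gst := by
      by_contra hcon
      push_neg at hcon
      have h1 : F gst * (gst - 1) < F γ0 * (γ0 - 1) := hh gst γ0 h1gst.le hcon hmem0.2
      have h2 : F 1 ≤ F gst := hFmono 1 gst h1gst.le hyp
      have h4 : F 1 * (gst - 1) ≤ F gst * (gst - 1) :=
        mul_le_mul_of_nonneg_right h2 (by linarith)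
      linarith only [h1, h4, hgstfix, hfix]
    have hFgst : 0 < F gst := hFpos gst hyp
    have hFgstge : F 1 ≤ F gst := hFmono 1 gst h1gst.le hyp
    obtain ⟨β, hβ⟩ : ∃ x : ℝ, x = 1 + α 0 / F gst := ⟨_, rfl⟩
    rw [← hβ]
    have hβ1 : 1 < β := by
      have : 0 < α 0 / F gst := div_pos (hα 0) hFgst
      rw [hβ]; linarith
    have hβle : β ≤ gst := by
      have h3 : α 0 / F gst ≤ α 0 / F 1 :=
        div_le_div_of_nonneg_left (hα 0).le hF1 hFgstge
      rw [hβ]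
      linarith [h3, hgst.le, hgst.ge]
    have hβfix : F gst * (β - 1) = α 0 := by
      rw [hβ]; field_simp; ring
    have hlower : β ≤ γ0 := by
      by_contra hcon
      push_neg at hcon
      have h1 : F γ0 * (γ0 - 1) < F β * (β - 1) :=
        hh γ0 β hmem0.1.le hcon (hβle.trans_lt hyp)
      have h2 : F β ≤ F gst := hFmono β gst hβle hyp
      have h4 : F β * (β - 1) ≤ F gst * (β - 1) :=
        mul_le_mul_of_nonneg_right h2 (by linarith [hβ1])
      linarith only [h1, h4, hβfix, hfix]
    exact ⟨hlower, hupper⟩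
end
end
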